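/- Let 0 < τ₁ < ⋯ < τ_M ≤ 1 be distinct positive nodes, Q the M×M collocation matrix, and Q_{Δ,M} = diag(τ₁/M, …, τ_M/M). Then the spectral radius of Q − Q_{Δ,M} is zero, i.e., all eigenvalues of Q − Q_{Δ,M} are zero. -/

import Mathlib

open Polynomial

noncomputable def pint {K : Type*} [Field K] [CharZero K] (p : K[X]) : K[X] :=
  p.sum fun n a => C (a / (n + 1)) * X ^ (n + 1)

variable {K : Type*} [Field K] [CharZero K]

theorem pint_coeff_zero (p : K[X]) : (pint p).coeff 0 = 0 := by
  simp [pint, coeff_sum, Polynomial.sum, coeff_C_mul, coeff_X_pow]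

theorem pint_coeff_succ (p : K[X]) (k : ℕ) :
    (pint p).coeff (k + 1) = p.coeff k / (k + 1) := by
  rw [pint, coeff_sum]
  rw [Polynomial.sum_def]
  simp only [coeff_C_mul, coeff_X_pow]
  rw [Finset.sum_eq_single k]
  · simp
  · intro b _ hb
    simp [Ne.symm hb]
  · intro h; simp [Polynomial.notMem_support_iff.mp h]

theorem derivative_pint (p : K[X]) : derivative (pint p) = p := by
  ext n
  rw [coeff_derivative, pint_coeff_succ]
  have h : ((n : K) + 1) ≠ 0 := Nat.cast_add_one_ne_zero n
  field_simp

theorem pint_eval_zero (p : K[X]) : (pint p).eval 0 = 0 := by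
  rw [pint, Polynomial.sum_def, eval_finset_sum]
  simp

theorem pint_map (p : ℝ[X]) :
    (pint p).map (algebraMap ℝ ℂ) = pint (p.map (algebraMap ℝ ℂ)) := by
  ext k
  cases k with
  | zero => simp [pint_coeff_zero, coeff_map]
  | succ k =>
    rw [coeff_map, pint_coeff_succ, pint_coeff_succ, coeff_map]
    push_cast [map_div₀]
    norm_num

theorem pint_integral (p : ℝ[X]) (x : ℝ) :
    ∫ s in (0:ℝ)..x, p.eval s = (pint p).eval x := by
  have h := intervalIntegral.integral_deriv_eq_sub (f := fun t => (pint p).eval t)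
    (a := 0) (b := x) (fun t _ => (Polynomial.hasDerivAt (pint p) t).differentiableAt)
    ?_
  · rw [pint_eval_zero, sub_zero] at h
    rw [← h]
    apply intervalIntegral.integral_congr
    intro t _
    rw [Polynomial.deriv, derivative_pint]
  · apply Continuous.intervalIntegrable
    have : (deriv fun t => (pint p).eval t) = fun t => (derivative (pint p)).eval t := by
      funext t; exact Polynomial.deriv _
    rw [this]
    exact Polynomial.continuous _

theorem pint_add (p q : K[X]) : pint (p + q) = pint p + pint q := by
  ext k
  cases k with
  | zero => simp [pint_coeff_zero]
  | succ k => simp [pint_coeff_succ, coeff_add, add_div]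

theorem pint_C_mul (c : K) (p : K[X]) : pint (C c * p) = C c * pint p := by
  ext k
  cases k with
  | zero => simp [pint_coeff_zero, coeff_C_mul]
  | succ k => simp [pint_coeff_succ, coeff_C_mul, mul_div_assoc]

theorem pint_sum {ι : Type*} (s : Finset ι) (f : ι → K[X]) :
    pint (∑ j ∈ s, f j) = ∑ j ∈ s, pint (f j) := by
  classical
  induction s using Finset.induction with
  | empty => ext k; cases k <;> simp [pint_coeff_zero, pint_coeff_succ]
  | @insert _ _ h ih => rw [Finset.sum_insert h, pint_add, ih, Finset.sum_insert h]
open Polynomial Matrix Finset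

noncomputable def collMat {M : ℕ} (τ : Fin M → ℝ) : Matrix (Fin M) (Fin M) ℝ :=
  Matrix.of fun i j => ∫ s in (0:ℝ)..(τ i), (Lagrange.basis Finset.univ τ j).eval s

/-- the spectral radius of `Q - Q_{Δ,M}` is zero: every (complex) eigenvalue
of `Q - Q_{Δ,M}` is zero. -/
theorem minSRNS_spectral_radius_zero (M : ℕ) (hM : 1 ≤ M) (τ : Fin M → ℝ)
    (hmono : StrictMono τ) (hpos : ∀ i, 0 < τ i) (h1 : ∀ i, τ i ≤ 1) :
    spectrum ℂ ((collMat τ - Matrix.diagonal fun i => τ i / M).map (algebraMap ℝ ℂ)) ⊆ {0} := by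
  classical
  set A : Matrix (Fin M) (Fin M) ℂ :=
    (collMat τ - Matrix.diagonal fun i => τ i / M).map (algebraMap ℝ ℂ) with hA
  intro μ hμ
  simp only [Set.mem_singleton_iff]
  by_contra hμ0
  -- get an eigenvector
  rw [← AlgEquiv.spectrum_eq (Matrix.toLinAlgEquiv' (R := ℂ) (n := Fin M)),
    ← Module.End.hasEigenvalue_iff_mem_spectrum] at hμ
  obtain ⟨v, hv⟩ := hμ.exists_hasEigenvector
  have hv0 : v ≠ 0 := hv.right
  have hveq : A.mulVec v = μ • v := hv.apply_eq_smul
  -- injectivity of nodes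
  have hτinj : Function.Injective τ := hmono.injective
  have hinjC : Function.Injective (fun i => (algebraMap ℝ ℂ) (τ i)) :=
    fun i j h => hτinj ((algebraMap ℝ ℂ).injective h)
  -- the interpolating polynomial
  set L : Fin M → ℂ[X] := fun j => (Lagrange.basis Finset.univ τ j).map (algebraMap ℝ ℂ) with hL
  set p : ℂ[X] := ∑ j, C (v j) * L j with hp
  have hLdeg : ∀ j, (L j).natDegree ≤ M - 1 := by
    intro j
    rw [hL, natDegree_map_eq_of_injective (algebraMap ℝ ℂ).injective,
      Lagrange.natDegree_basis (Set.injOn_of_injective hτinj) (Finset.mem_univ j)]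
    simp
  have hpdeg : p.natDegree ≤ M - 1 := by
    refine natDegree_sum_le_of_forall_le _ _ fun j _ => ?_
    exact (natDegree_C_mul_le _ _).trans (hLdeg j)
  have hpcoeff : ∀ k, M ≤ k → p.coeff k = 0 := by
    intro k hk
    apply coeff_eq_zero_of_natDegree_lt
    exact lt_of_le_of_lt hpdeg (by omega)
  -- evaluation of p at nodes
  have hLeval : ∀ i j, (L j).eval (algebraMap ℝ ℂ (τ i)) =
      algebraMap ℝ ℂ ((Lagrange.basis Finset.univ τ j).eval (τ i)) := by
    intro i j
    rw [hL, eval_map, eval₂_at_apply]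
  have hpeval : ∀ i, p.eval (algebraMap ℝ ℂ (τ i)) = v i := by
    intro i
    rw [hp, eval_finset_sum]
    rw [Finset.sum_eq_single i]
    · rw [eval_mul, hLeval, Lagrange.eval_basis_self (Set.injOn_of_injective hτinj)
        (Finset.mem_univ i)]
      simp
    · intro j _ hj
      rw [eval_mul, hLeval, Lagrange.eval_basis_of_ne hj (Finset.mem_univ i)]
      simp
    · simp
  -- collocation entries via pint
  have hQ : ∀ i j, collMat τ i j = (pint (Lagrange.basis Finset.univ τ j)).eval (τ i) := by
    intro i j
    exact pint_integral _ _
  -- the key polynomial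
  set q : ℂ[X] := pint p - C ((M : ℂ))⁻¹ * X * p - C μ * p with hq
  have hMne : (M : ℂ) ≠ 0 := by exact_mod_cast (by omega : M ≠ 0)
  -- q vanishes at each node
  have hqeval : ∀ i, q.eval (algebraMap ℝ ℂ (τ i)) = 0 := by
    intro i
    have hmv := congrFun hveq i
    have hsum : (A.mulVec v) i = ∑ j, A i j * v j := rfl
    have hAij : ∀ j, A i j = algebraMap ℝ ℂ (collMat τ i j)
        - (if j = i then algebraMap ℝ ℂ (τ i / M) else 0) := by
      intro j
      simp only [hA, Matrix.map_apply, Matrix.sub_apply, Matrix.diagonal_apply, map_sub]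
      by_cases h : i = j <;> simp [h, eq_comm]
    have hpint : (pint p).eval (algebraMap ℝ ℂ (τ i))
        = ∑ j, algebraMap ℝ ℂ (collMat τ i j) * v j := by
      have : pint p = ∑ j, C (v j) * pint (L j) := by
        rw [hp, pint_sum]
        exact Finset.sum_congr rfl fun j _ => pint_C_mul _ _
      rw [this, eval_finset_sum]
      refine Finset.sum_congr rfl fun j _ => ?_
      rw [eval_mul, eval_C, hL, ← pint_map, eval_map, eval₂_at_apply, hQ, mul_comm]
    have hsum2 : ∑ j, A i j * v j
        = (∑ j, algebraMap ℝ ℂ (collMat τ i j) * v j) - algebraMap ℝ ℂ (τ i / M) * v i := by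
      simp only [hAij, sub_mul, Finset.sum_sub_distrib]
      congr 1
      rw [Finset.sum_eq_single i]
      · simp
      · intro b _ hb; simp [hb]
      · intro h; exact absurd (Finset.mem_univ i) h
    rw [hq]
    simp only [eval_sub, eval_mul, eval_C, eval_X]
    rw [hpint, hpeval]
    have halg : algebraMap ℝ ℂ (τ i / M) = (M:ℂ)⁻¹ * algebraMap ℝ ℂ (τ i) := by
      rw [map_div₀]; push_cast; ring
    have hkey : ∑ j, algebraMap ℝ ℂ (collMat τ i j) * v j
        = μ * v i + (M:ℂ)⁻¹ * algebraMap ℝ ℂ (τ i) * v i := by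
      have h2 := hmv
      rw [hsum, hsum2, halg] at h2
      simp only [Pi.smul_apply, smul_eq_mul] at h2
      linear_combination h2
    rw [hkey]; ring
  -- q has degree < M
  have hqcoeff : ∀ k, M ≤ k → q.coeff k = 0 := by
    intro k hk
    obtain ⟨m, rfl⟩ : ∃ m, k = m + 1 := ⟨k - 1, by omega⟩
    rw [hq]
    simp only [coeff_sub, pint_coeff_succ, coeff_C_mul, mul_assoc, coeff_X_mul]
    rw [hpcoeff (m+1) hk]
    rcases Nat.lt_or_ge m M with hm | hm
    · have hmM : m = M - 1 := by omega
      have : (m : ℂ) + 1 = (M : ℂ) := by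
        have : m + 1 = M := by omega
        exact_mod_cast congrArg (Nat.cast : ℕ → ℂ) this
      rw [this]
      field_simp
      ring
    · rw [hpcoeff m hm]
      simp
  have hqdeg : q.natDegree < M := by
    by_contra h
    push_neg at h
    have := hqcoeff q.natDegree h
    rcases eq_or_ne q 0 with h0 | h0
    · rw [h0] at h; simp at h; omega
    · exact (leadingCoeff_ne_zero.mpr h0) this
  have hq0 : q = 0 := by
    apply Polynomial.eq_zero_of_natDegree_lt_card_of_eval_eq_zero q hinjC hqeval
    simpa using hqdeg
  -- from q = 0 and μ ≠ 0, all coefficients of p vanish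
  have hpz : ∀ k, p.coeff k = 0 := by
    intro k
    induction k with
    | zero =>
      have := congrArg (fun r => Polynomial.coeff r 0) hq0
      simp only [hq, coeff_sub, pint_coeff_zero, coeff_C_mul, mul_assoc, coeff_zero] at this
      rw [coeff_X_mul_zero] at this
      simp only [mul_zero, zero_sub, sub_zero, neg_eq_zero] at this
      exact (mul_eq_zero.mp this).resolve_left hμ0
    | succ k ih =>
      have := congrArg (fun r => Polynomial.coeff r (k+1)) hq0
      simp only [hq, coeff_sub, pint_coeff_succ, coeff_C_mul, mul_assoc, coeff_zero,
        coeff_X_mul] at this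
      rw [ih] at this
      simp only [zero_div, mul_zero, zero_sub, sub_zero, zero_sub, neg_eq_zero] at this
      exact (mul_eq_zero.mp this).resolve_left hμ0
  have hp0 : p = 0 := leadingCoeff_eq_zero.mp (hpz _)
  apply hv0
  funext i
  have := hpeval i
  rw [hp0] at this
  simpa using this.symm
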